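/- Let C be a 3×3 unitary matrix with entries a^{(i,j)} and λ ∈ ℝ such that a^{(1,1)} e^{iλ} − det(C) · conj(a^{(3,3)}) ≠ 0. Then the transfer matrix T(λ) satisfies |det T(λ)| = 1. -/

import Mathlib

open Complex Matrix ComplexConjugate

noncomputable section

/-- The transfer matrix `T(λ)` of a 3×3 coin matrix `M`. -/
def transfer (M : Matrix (Fin 3) (Fin 3) ℂ) (lam : ℝ) : Matrix (Fin 2) (Fin 2) ℂ :=
  (M 0 0 * Complex.exp (lam * Complex.I) - M.det * conj (M 2 2))⁻¹ •
    !![Complex.exp (lam * Complex.I) * (Complex.exp (lam * Complex.I) - M 1 1),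
        -(M 0 2 * Complex.exp (lam * Complex.I)) - M.det * conj (M 2 0);
        M 2 0 * Complex.exp (lam * Complex.I) + M.det * conj (M 0 2),
        -(M.det * (Complex.exp (-(lam * Complex.I)) - conj (M 1 1)))]

/-- for a 3×3 unitary coin `M` and `λ ∈ ℝ` with
`a^{(1,1)} e^{iλ} − det C ⬝ conj a^{(3,3)} ≠ 0`, the transfer matrix has
determinant of modulus 1. -/
theorem abs_det_transfer_eq_one (M : Matrix (Fin 3) (Fin 3) ℂ)
    (hM : M ∈ Matrix.unitaryGroup (Fin 3) ℂ) (lam : ℝ)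
    (hden : M 0 0 * Complex.exp (lam * Complex.I) - M.det * conj (M 2 2) ≠ 0) :
    ‖(transfer M lam).det‖ = 1 := by
  set e : ℂ := Complex.exp (lam * Complex.I) with he
  set f : ℂ := Complex.exp (-(lam * Complex.I)) with hf
  have he0 : e ≠ 0 := Complex.exp_ne_zero _
  have hef : e * f = 1 := by rw [he, hf, ← Complex.exp_add]; simp
  have hfe : f = e⁻¹ := by field_simp at hef ⊢; linear_combination hef
  have hconj_e : conj e = f := by
    rw [he, hf, ← Complex.exp_conj]; congr 1
    simp [Complex.conj_ofReal]
  have hMH : M * Mᴴ = 1 := Matrix.mem_unitaryGroup_iff.mp hM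
  have hadj : M.adjugate = M.det • Mᴴ := by
    calc M.adjugate = M.adjugate * (M * Mᴴ) := by rw [hMH, mul_one]
      _ = (M.adjugate * M) * Mᴴ := by rw [mul_assoc]
      _ = M.det • Mᴴ := by rw [Matrix.adjugate_mul, Matrix.smul_mul, Matrix.one_mul]
  have key : ∀ i j : Fin 3, M.det * conj (M j i) = M.adjugate i j := by
    intro i j
    rw [hadj]
    simp [Matrix.conjTranspose_apply, Matrix.smul_apply]
  have h22 : M.det * conj (M 2 2) = M 0 0 * M 1 1 - M 0 1 * M 1 0 := by
    rw [key 2 2, Matrix.adjugate_fin_three]; simp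
  have h20 : M.det * conj (M 2 0) = M 0 1 * M 1 2 - M 0 2 * M 1 1 := by
    rw [key 0 2, Matrix.adjugate_fin_three]; simp
  have h02 : M.det * conj (M 0 2) = M 1 0 * M 2 1 - M 1 1 * M 2 0 := by
    rw [key 2 0, Matrix.adjugate_fin_three]; simp
  have h11 : M.det * conj (M 1 1) = M 0 0 * M 2 2 - M 0 2 * M 2 0 := by
    rw [key 1 1, Matrix.adjugate_fin_three]; simp
  have h00 : M.det * conj (M 0 0) = M 1 1 * M 2 2 - M 1 2 * M 2 1 := by
    rw [key 0 0, Matrix.adjugate_fin_three]; simp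
  have hDmem := Matrix.det_of_mem_unitary hM
  have hDn : ‖M.det‖ = 1 := CStarRing.norm_of_mem_unitary hDmem
  have hDD : M.det * conj M.det = 1 := by
    have := hDmem.2
    simpa [mul_comm] using this
  set d : ℂ := M 0 0 * e - M.det * conj (M 2 2) with hd
  -- determinant of the transfer matrix
  have hdet : (transfer M lam).det
      = d⁻¹ ^ 2 * (e * (e - M 1 1) * (-(M.det * (f - conj (M 1 1))))
        - (-(M 0 2 * e) - M.det * conj (M 2 0)) * (M 2 0 * e + M.det * conj (M 0 2))) := by
    rw [transfer, Matrix.det_smul, Matrix.det_fin_two_of]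
    norm_num
    rfl
  have hkey : e * (e - M 1 1) * (-(M.det * (f - conj (M 1 1))))
        - (-(M 0 2 * e) - M.det * conj (M 2 0)) * (M 2 0 * e + M.det * conj (M 0 2))
      = -(e * (M.det * conj d) * d) := by
    have hDconjd : M.det * conj d = (M.det * conj (M 0 0)) * f - M 2 2 := by
      rw [hd]
      simp only [map_sub, _root_.map_mul, hconj_e, Complex.conj_conj]
      linear_combination -(M 2 2 : ℂ) * hDD
    rw [hDconjd, h00, hd, h22, h20, h02]
    rw [mul_sub (M.det), mul_comm M.det (conj (M 1 1))]
    rw [show conj (M 1 1) * M.det = M 0 0 * M 2 2 - M 0 2 * M 2 0 by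
      rw [mul_comm]; exact h11]
    rw [Matrix.det_fin_three, hfe]
    field_simp
    ring
  rw [hdet, hkey]
  rw [norm_mul, norm_neg, norm_mul, norm_mul, norm_mul, norm_pow, norm_inv]
  rw [RCLike.norm_conj, hDn]
  have hE : ‖e‖ = 1 := by rw [he]; exact Complex.norm_exp_ofReal_mul_I lam
  have hdn : ‖d‖ ≠ 0 := norm_ne_zero_iff.mpr hden
  rw [hE]
  field_simp
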